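/- Let B be a C*-algebra, E a Hilbert B-module, and F a closed ternary subspace of E. Then F is a closed submodule of E (i.e. f·b ∈ F for all f ∈ F, b ∈ B) if and only if B_F, the closed linear span of {⟨f,f'⟩ : f, f' ∈ F}, is a closed two-sided ideal of B. -/

import Mathlib

open scoped RightActions

/-- The closed linear span of a subset of a topological `ℂ`-module. -/
noncomputable def clSpan {M : Type*} [AddCommMonoid M] [Module ℂ M] [TopologicalSpace M]
    (S : Set M) : Set M :=
  closure (Submodule.span ℂ S : Set M)

/-- A subset is a (complex) linear subspace. -/
def IsLinearSubspace {M : Type*} [AddCommMonoid M] [Module ℂ M] (K : Set M) : Prop :=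
  (0 : M) ∈ K ∧ (∀ x ∈ K, ∀ y ∈ K, x + y ∈ K) ∧ ∀ (c : ℂ), ∀ x ∈ K, c • x ∈ K

/-- A closed two-sided ideal of a C*-algebra `B`. -/
structure IsClosedTwoSidedIdeal {B : Type*} [NonUnitalCStarAlgebra B] (I : Set B) : Prop where
  isClosed : IsClosed I
  subspace : IsLinearSubspace I
  mul_mem_left : ∀ (b : B), ∀ a ∈ I, b * a ∈ I
  mul_mem_right : ∀ (b : B), ∀ a ∈ I, a * b ∈ I

/-- The Hilbert C⋆-module class as it stood in Mathlib of December 2024 (right action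
`E <• a`, inner product `A`-linear in the second argument on the right). Mathlib's
`CStarModule` now describes left modules instead. -/
class CStarModuleRight (A E : Type*) [NonUnitalSemiring A] [StarRing A] [Module ℂ A]
    [AddCommGroup E] [Module ℂ E] [PartialOrder A] [SMul Aᵐᵒᵖ E] [Norm A] [Norm E]
    extends Inner A E where
  inner_add_right {x} {y} {z} : inner x (y + z) = inner x y + inner x z
  inner_self_nonneg {x} : 0 ≤ inner x x
  inner_self {x} : inner x x = 0 ↔ x = 0
  inner_op_smul_right {a : A} {x y : E} : inner x (y <• a) = inner x y * a
  inner_smul_right_complex {z : ℂ} {x} {y} : inner x (z • y) = z • inner x y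
  star_inner x y : star (inner x y) = inner y x
  norm_eq_sqrt_norm_inner_self x : ‖x‖ = Real.sqrt ‖inner x x‖

section HilbertModule

variable (B : Type*) [NonUnitalCStarAlgebra B] [PartialOrder B] [StarOrderedRing B]
variable {E : Type*} [NormedAddCommGroup E] [NormedSpace ℂ E] [SMul Bᵐᵒᵖ E] [CStarModuleRight B E]

/-- `K ⊆ E` is an *ideal submodule* if it is the closed linear span of
`{x <• i : x ∈ E, i ∈ I}` for some closed two-sided ideal `I` of `B`. -/
def IsIdealSubmodule (K : Set E) : Prop :=
  ∃ I : Set B, IsClosedTwoSidedIdeal I ∧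
    K = clSpan {z : E | ∃ x : E, ∃ i ∈ I, z = x <• i}

/-- A *ternary ideal* of a Hilbert `B`-module `E`: a linear subspace `K` with
`x <• ⟪k, y⟫ ∈ K` for all `x y ∈ E` and `k ∈ K`. -/
def IsTernaryIdeal (K : Set E) : Prop :=
  IsLinearSubspace K ∧ ∀ (x y : E), ∀ k ∈ K, x <• (inner B k y : B) ∈ K

/-- `B_S`: the closed linear span in `B` of all inner products of elements of `S`. -/
noncomputable def rangeIdeal (S : Set E) : Set B :=
  clSpan {b : B | ∃ k ∈ S, ∃ k' ∈ S, b = (inner B k k' : B)}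

/-- The orthogonal complement of a subset of a Hilbert `B`-module. -/
def perp (S : Set E) : Set E :=
  {x : E | ∀ s ∈ S, (inner B x s : B) = 0}

end HilbertModule

set_option linter.unusedSectionVars false
set_option linter.unusedVariables false

section gen
variable {M N : Type*} [NormedAddCommGroup M] [NormedSpace ℂ M]
  [NormedAddCommGroup N] [NormedSpace ℂ N]

lemma isClosed_clSpan (S : Set M) : IsClosed (clSpan S) := isClosed_closure

lemma isLinearSubspace_clSpan (S : Set M) : IsLinearSubspace (clSpan S) := by
  let K := (Submodule.span ℂ S).topologicalClosure
  have hK : clSpan S = (K : Set M) := rfl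
  rw [hK]
  exact ⟨K.zero_mem, fun x hx y hy => K.add_mem hx hy, fun c x hx => K.smul_mem c hx⟩

lemma subset_clSpan (S : Set M) : S ⊆ clSpan S :=
  fun x hx => subset_closure (Submodule.subset_span hx)

lemma clSpan_mapsTo (T : M →L[ℂ] N) {S : Set M} {K : Set N}
    (hK : IsLinearSubspace K) (hKc : IsClosed K) (h : ∀ s ∈ S, T s ∈ K) :
    ∀ x ∈ clSpan S, T x ∈ K := by
  obtain ⟨h0, hadd, hsmul⟩ := hK
  have hsub : (Submodule.span ℂ S : Set M) ⊆ T ⁻¹' K := by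
    intro x hx
    induction hx using Submodule.span_induction with
    | mem x hx => exact h x hx
    | zero => simpa using h0
    | add x y _ _ hx hy => simpa using hadd _ hx _ hy
    | smul c x _ hx => simpa using hsmul c _ hx
  intro x hx
  exact closure_minimal hsub (hKc.preimage T.continuous) hx

lemma IsLinearSubspace.sub_mem' {K : Set M} (hK : IsLinearSubspace K)
    {x y : M} (hx : x ∈ K) (hy : y ∈ K) : x - y ∈ K := by
  have := hK.2.1 x hx _ (hK.2.2 (-1 : ℂ) y hy)
  simpa [sub_eq_add_neg] using this

lemma IsLinearSubspace.rsmul_mem {K : Set M} (hK : IsLinearSubspace K)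
    (r : ℝ) {x : M} (hx : x ∈ K) : r • x ∈ K := by
  have := hK.2.2 (r : ℂ) x hx
  rwa [Complex.coe_smul] at this

end gen

namespace CStarModuleRight
variable {B : Type*} [NonUnitalCStarAlgebra B] [PartialOrder B]
variable {E : Type*} [NormedAddCommGroup E] [NormedSpace ℂ E] [SMul Bᵐᵒᵖ E] [CStarModuleRight B E]

lemma inner_sub_right (x y z : E) : (inner B x (y - z) : B) = inner B x y - inner B x z := by
  apply eq_sub_of_add_eq
  rw [← CStarModuleRight.inner_add_right, sub_add_cancel]

lemma inner_zero_right (x : E) : (inner B x (0 : E) : B) = 0 := by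
  have h := CStarModuleRight.inner_add_right (A := B) (x := x) (y := (0 : E)) (z := (0 : E))
  rw [add_zero] at h
  exact (left_eq_add.mp h)

lemma inner_op_smul_left (a : B) (x y : E) : (inner B (x <• a) y : B) = star a * inner B x y := by
  rw [← CStarModuleRight.star_inner y, CStarModuleRight.inner_op_smul_right, star_mul,
    CStarModuleRight.star_inner]

lemma norm_sq_eq (x : E) : ‖x‖ ^ 2 = ‖(inner B x x : B)‖ := by
  rw [CStarModuleRight.norm_eq_sqrt_norm_inner_self (A := B) x, Real.sq_sqrt (norm_nonneg _)]

end CStarModuleRight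

section mod
variable {B : Type*} [NonUnitalCStarAlgebra B] [PartialOrder B] [StarOrderedRing B]
variable {E : Type*} [NormedAddCommGroup E] [NormedSpace ℂ E] [SMul Bᵐᵒᵖ E] [CStarModuleRight B E]

lemma myext {u v : E} (h : ∀ z : E, (inner B z u : B) = inner B z v) : u = v := by
  have h0 : (inner B (u - v) (u - v) : B) = 0 := by
    rw [CStarModuleRight.inner_sub_right, h, sub_self]
  exact sub_eq_zero.mp (CStarModuleRight.inner_self.mp h0)

lemma op_smul_add' (f : E) (b c : B) : f <• (b + c) = f <• b + f <• c := by
  refine myext (B := B) fun z => ?_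
  rw [CStarModuleRight.inner_add_right, CStarModuleRight.inner_op_smul_right,
    CStarModuleRight.inner_op_smul_right, CStarModuleRight.inner_op_smul_right, mul_add]

lemma op_smul_csmul (f : E) (z : ℂ) (b : B) : f <• (z • b) = z • (f <• b) := by
  refine myext (B := B) fun w => ?_
  rw [CStarModuleRight.inner_op_smul_right, CStarModuleRight.inner_smul_right_complex,
    CStarModuleRight.inner_op_smul_right, mul_smul_comm]

lemma zero_op_smul' (b : B) : (0 : E) <• b = 0 := by
  refine myext (B := B) fun w => ?_
  rw [CStarModuleRight.inner_op_smul_right, CStarModuleRight.inner_zero_right, zero_mul]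

lemma norm_op_smul_le' (f : E) (b : B) : ‖f <• b‖ ≤ ‖f‖ * ‖b‖ := by
  have h2 : ‖f <• b‖ ^ 2 ≤ (‖f‖ * ‖b‖) ^ 2 := by
    rw [CStarModuleRight.norm_sq_eq (B := B)]
    calc ‖(inner B (f <• b) (f <• b) : B)‖ = ‖star b * ((inner B f f : B) * b)‖ := by
          rw [CStarModuleRight.inner_op_smul_right, CStarModuleRight.inner_op_smul_left, mul_assoc]
      _ ≤ ‖star b‖ * (‖(inner B f f : B)‖ * ‖b‖) :=
          norm_mul_le _ _ |>.trans (by gcongr; exact norm_mul_le _ _)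
      _ = ‖b‖ * (‖f‖^2 * ‖b‖) := by rw [norm_star, CStarModuleRight.norm_sq_eq (B := B)]
      _ = (‖f‖ * ‖b‖)^2 := by ring
  exact le_of_pow_le_pow_left₀ two_ne_zero (by positivity) h2

noncomputable def opSmulCLM (f : E) : B →L[ℂ] E :=
  LinearMap.mkContinuous
    { toFun := fun b => f <• b
      map_add' := op_smul_add' f
      map_smul' := op_smul_csmul f } ‖f‖ (fun b => by simpa using norm_op_smul_le' f b)

@[simp] lemma opSmulCLM_apply (f : E) (b : B) : opSmulCLM f b = f <• b := rfl

end mod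

section auxbound
variable {B : Type*} [NonUnitalCStarAlgebra B] [PartialOrder B] [StarOrderedRing B]

lemma aux_norm_bound (a : B) (ha : 0 ≤ a) (M : ℝ) (hM : 0 < M) (hMa : ‖a‖ ≤ M) (m : ℕ)
    (hm : 0 < m) :
    ‖(a : Unitization ℂ B) * ((1 : Unitization ℂ B) - M⁻¹ • (a : Unitization ℂ B)) ^ m‖
      ≤ M / m := by
  set a1 : Unitization ℂ B := (a : Unitization ℂ B) with ha1def
  have ha1 : 0 ≤ a1 := Unitization.inr_nonneg_iff.mpr ha
  have hsa : IsSelfAdjoint a1 := ha1.isSelfAdjoint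
  have h1 : cfc (fun t : ℝ => 1 - M⁻¹ * t) a1 = 1 - M⁻¹ • a1 := by
    rw [cfc_sub _ _ a1, cfc_const_one ℝ a1, cfc_const_mul_id M⁻¹ a1]
  have hX : a1 * ((1 : Unitization ℂ B) - M⁻¹ • a1) ^ m
      = cfc (fun t : ℝ => t * (1 - M⁻¹ * t) ^ m) a1 := by
    rw [cfc_mul _ _ a1, cfc_id' ℝ a1, cfc_pow _ m a1, h1]
  rw [hX]
  refine norm_cfc_le (by positivity) fun t ht => ?_
  have ht0 : 0 ≤ t := spectrum_nonneg_of_nonneg ha1 ht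
  have htM : t ≤ M := by
    have h2 := spectrum.norm_le_norm_of_mem ht
    rw [Unitization.norm_inr] at h2
    calc t ≤ |t| := le_abs_self t
      _ = ‖t‖ := rfl
      _ ≤ ‖a‖ := h2
      _ ≤ M := hMa
  set u : ℝ := M⁻¹ * t with hu
  have hu0 : 0 ≤ u := by positivity
  have hu1 : u ≤ 1 := by
    rw [hu, inv_mul_le_iff₀ hM]
    linarith
  have key : (1 - u) ^ m * (1 + m * u) ≤ 1 := by
    calc (1 - u) ^ m * (1 + m * u) ≤ (1 - u) ^ m * (1 + u) ^ m := by
          gcongr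
          exact one_add_mul_le_pow (by linarith) m
      _ = ((1 - u) * (1 + u)) ^ m := (mul_pow _ _ _).symm
      _ = (1 - u ^ 2) ^ m := by ring_nf
      _ ≤ 1 := pow_le_one₀ (by nlinarith) (by nlinarith)
  have ht' : t = M * u := by rw [hu]; field_simp
  have hg0 : 0 ≤ t * (1 - u) ^ m := mul_nonneg ht0 (pow_nonneg (by linarith) m)
  rw [Real.norm_of_nonneg hg0]
  have hden : (0:ℝ) < 1 + m * u := by positivity
  have step1 : (1 - u) ^ m ≤ 1 / (1 + m * u) := by
    rw [le_div_iff₀ hden]; exact key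
  have hm' : (0:ℝ) < m := by exact_mod_cast hm
  have step2 : u / (1 + m * u) ≤ 1 / m := by
    rw [div_le_div_iff₀ hden hm']
    nlinarith
  calc t * (1 - u) ^ m ≤ t * (1 / (1 + m * u)) := mul_le_mul_of_nonneg_left step1 ht0
    _ = M * (u / (1 + m * u)) := by rw [ht']; ring
    _ ≤ M * (1 / m) := mul_le_mul_of_nonneg_left step2 hM.le
    _ = M / m := by ring

end auxbound


/-- a closed ternary subspace `F` of `E` is a (closed) submodule of `E` if and
only if `B_F` is a closed two-sided ideal of `B`. -/
theorem ternary_subspace_isSubmodule_iff_rangeIdeal_isIdeal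
    {B : Type*} [NonUnitalCStarAlgebra B] [PartialOrder B] [StarOrderedRing B]
    {E : Type*} [NormedAddCommGroup E] [NormedSpace ℂ E] [SMul Bᵐᵒᵖ E]
    [CStarModuleRight B E] [CompleteSpace E] (F : Set E) (hcl : IsClosed F) (hsub : IsLinearSubspace F)
    (ht : ∀ f ∈ F, ∀ f' ∈ F, ∀ f'' ∈ F, f <• (inner B f' f'' : B) ∈ F) :
    (∀ f ∈ F, ∀ b : B, f <• b ∈ F) ↔ IsClosedTwoSidedIdeal (rangeIdeal B F) := by
  constructor
  · intro hmod
    refine ⟨isClosed_clSpan _, isLinearSubspace_clSpan _, ?_, ?_⟩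
    · intro b x hx
      refine clSpan_mapsTo (ContinuousLinearMap.mul ℂ B b)
        (isLinearSubspace_clSpan _) (isClosed_clSpan _) ?_ x hx
      rintro _ ⟨k, hk, k', hk', rfl⟩
      have hb : (b * (inner B k k' : B)) = (inner B (k <• star b) k' : B) := by
        rw [CStarModuleRight.inner_op_smul_left, star_star]
      show b * (inner B k k' : B) ∈ rangeIdeal B F
      rw [hb]
      exact subset_clSpan _ ⟨k <• star b, hmod k hk (star b), k', hk', rfl⟩
    · intro b x hx
      refine clSpan_mapsTo ((ContinuousLinearMap.mul ℂ B).flip b)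
        (isLinearSubspace_clSpan _) (isClosed_clSpan _) ?_ x hx
      rintro _ ⟨k, hk, k', hk', rfl⟩
      have hb : ((inner B k k' : B) * b) = (inner B k (k' <• b) : B) := by
        rw [CStarModuleRight.inner_op_smul_right]
      show (inner B k k' : B) * b ∈ rangeIdeal B F
      rw [hb]
      exact subset_clSpan _ ⟨k, hk, k' <• b, hmod k' hk' b, rfl⟩
  · intro hI f hf b
    have hstep : ∀ i ∈ rangeIdeal B F, f <• i ∈ F := by
      refine clSpan_mapsTo (opSmulCLM (B := B) f) hsub hcl ?_
      rintro _ ⟨k, hk, k', hk', rfl⟩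
      exact ht f hf k hk k' hk'
    set a : B := (inner B f f : B) with ha_def
    have ha : 0 ≤ a := CStarModuleRight.inner_self_nonneg
    have haI : a ∈ rangeIdeal B F := subset_clSpan _ ⟨f, hf, f, hf, rfl⟩
    by_cases h0 : a = 0
    · have hf0 : f = 0 := CStarModuleRight.inner_self.mp h0
      rw [hf0, zero_op_smul']
      exact hsub.1
    set M : ℝ := ‖a‖ with hMdef
    have hM : 0 < M := norm_pos_iff.mpr h0
    -- the approximating sequence
    set a1 : Unitization ℂ B := (a : Unitization ℂ B) with ha1def
    set s : Unitization ℂ B := 1 - M⁻¹ • a1 with hsdef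
    set e : ℕ → B := fun n => Nat.rec (0 : B) (fun _ en => en + M⁻¹ • (a - a * en)) n with hedef
    have he0 : e 0 = 0 := rfl
    have heS : ∀ n, e (n+1) = e n + M⁻¹ • (a - a * e n) := fun n => rfl
    have heI : ∀ n, e n ∈ rangeIdeal B F := by
      intro n
      induction n with
      | zero => rw [he0]; exact (isLinearSubspace_clSpan _).1
      | succ n ih =>
        rw [heS]
        refine (isLinearSubspace_clSpan _).2.1 _ ih _ ?_
        refine (isLinearSubspace_clSpan _).rsmul_mem _ ?_
        exact (isLinearSubspace_clSpan _).sub_mem' haI (hI.mul_mem_right (e n) a haI)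
    have hse : ∀ n, ((e n : B) : Unitization ℂ B) = 1 - s ^ n := by
      intro n
      induction n with
      | zero => simp [he0]
      | succ n ih =>
        rw [heS, Unitization.inr_add, Unitization.inr_smul, Unitization.inr_sub,
          Unitization.inr_mul, ih, ← ha1def]
        have h1 : a1 - a1 * (1 - s ^ n) = a1 * s ^ n := by
          rw [mul_sub, mul_one, sub_sub_cancel]
        rw [h1, pow_succ', hsdef, sub_mul, one_mul, smul_mul_assoc]
        abel
    have ha1 : 0 ≤ a1 := Unitization.inr_nonneg_iff.mpr ha
    have hsa : IsSelfAdjoint a1 := ha1.isSelfAdjoint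
    have hs_star : star s = s := by
      rw [hsdef]; simp [star_smul, hsa.star_eq]
    have hc : Commute a1 s :=
      (Commute.one_right a1).sub_right ((Commute.refl a1).smul_right M⁻¹)
    -- the cfc norm bound
    have hXnorm : ∀ m : ℕ, 0 < m → ‖a1 * s ^ m‖ ≤ M / m := by
      intro m hm
      rw [ha1def, hsdef, ha1def]
      exact aux_norm_bound a ha M hM le_rfl m hm
    set b1 : Unitization ℂ B := (b : Unitization ℂ B) with hb1def
    -- the key estimate
    have hbound : ∀ n : ℕ,
        ‖f <• b - f <• (e (n+1) * b)‖ ^ 2 ≤ ‖b‖ ^ 2 * (M / (2 * (n+1))) := by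
      intro n
      set p : ℕ := n + 1 with hpdef
      set m : ℕ := 2 * p with hmdef
      set c : B := b - e p * b with hcdef
      have hdiff : f <• b - f <• (e p * b) = f <• c := by
        have h2 := map_sub (opSmulCLM f) b (e p * b)
        simp only [opSmulCLM_apply] at h2
        rw [hcdef, h2]
      rw [hdiff, CStarModuleRight.norm_sq_eq (B := B)]
      have hin : (inner B (f <• c) (f <• c) : B) = star c * a * c := by
        rw [CStarModuleRight.inner_op_smul_right, CStarModuleRight.inner_op_smul_left, ← ha_def]
      rw [hin, ← Unitization.norm_inr (𝕜 := ℂ)]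
      have hc1 : ((c : B) : Unitization ℂ B) = s ^ p * b1 := by
        rw [hcdef, Unitization.inr_sub, Unitization.inr_mul, hse p, ← hb1def,
          sub_mul, one_mul, sub_sub_cancel]
      have hcp : Commute a1 (s ^ p) := hc.pow_right p
      have hmid : s ^ p * a1 * s ^ p = a1 * s ^ m := by
        rw [← hcp.eq, mul_assoc, ← pow_add]
        congr 1
        rw [hmdef, two_mul]
      have key1 : ((star c * a * c : B) : Unitization ℂ B) = star b1 * (a1 * s ^ m * b1) := by
        rw [Unitization.inr_mul, Unitization.inr_mul, Unitization.inr_star, hc1, ← ha1def,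
          star_mul, star_pow, hs_star, ← hmid]
        simp only [mul_assoc]
      rw [key1]
      have hnb1 : ‖star b1‖ = ‖b‖ := by rw [norm_star, hb1def, Unitization.norm_inr]
      have hnb1' : ‖b1‖ = ‖b‖ := by rw [hb1def, Unitization.norm_inr]
      calc ‖star b1 * (a1 * s ^ m * b1)‖ ≤ ‖star b1‖ * ‖a1 * s ^ m * b1‖ := norm_mul_le _ _
        _ ≤ ‖star b1‖ * (‖a1 * s ^ m‖ * ‖b1‖) := by gcongr; exact norm_mul_le _ _
        _ ≤ ‖b‖ * ((M / m) * ‖b‖) := by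
            rw [hnb1, hnb1']
            gcongr
            exact hXnorm m (by omega)
        _ = ‖b‖ ^ 2 * (M / m) := by ring
        _ = ‖b‖ ^ 2 * (M / (2 * (n+1))) := by
            rw [hmdef, hpdef]
            push_cast
            ring_nf
    -- conclude by closedness
    rw [← hcl.closure_eq]
    refine Metric.mem_closure_iff.mpr fun ε hε => ?_
    obtain ⟨n, hn⟩ := exists_nat_gt (‖b‖ ^ 2 * M / (2 * ε ^ 2))
    refine ⟨f <• (e (n+1) * b), hstep _ (hI.mul_mem_right b _ (heI (n+1))), ?_⟩
    rw [dist_eq_norm]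
    have h2 := hbound n
    have h3 : ‖b‖ ^ 2 * (M / (2 * ((n:ℝ)+1))) < ε ^ 2 := by
      have hpos : (0:ℝ) < 2 * ε ^ 2 := by positivity
      have h4 : ‖b‖ ^ 2 * M < (n : ℝ) * (2 * ε ^ 2) := (div_lt_iff₀ hpos).mp hn
      have h5 : (0:ℝ) < 2 * ((n:ℝ)+1) := by positivity
      rw [mul_div_assoc'] at *
      rw [div_lt_iff₀ h5]
      nlinarith [sq_nonneg (‖b‖ : ℝ), hε]
    have h6 : ‖f <• b - f <• (e (n+1) * b)‖ ^ 2 < ε ^ 2 := lt_of_le_of_lt h2 h3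
    exact lt_of_pow_lt_pow_left₀ 2 hε.le h6
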